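/- Let b be an ℝ-linear endomorphism of a finite dimensional real vector space W with b² = -1. Then there exist elements w₁, ..., w_m in W such that {w₁, bw₁, ..., w_m, bw_m} is a basis of W over ℝ. -/

import Mathlib

/-- If `b` is an endomorphism of a finite dimensional real vector space with
`b² = -1`, then there is a basis of the form `{w₁, bw₁, ..., w_m, bw_m}`. -/
theorem stmt3 (W : Type*) [AddCommGroup W] [Module ℝ W] [FiniteDimensional ℝ W]
    (b : W →ₗ[ℝ] W) (hb : b ∘ₗ b = -LinearMap.id) :
    ∃ (m : ℕ) (B : Module.Basis (Fin m × Fin 2) ℝ W),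
      ∀ j : Fin m, B (j, 1) = b (B (j, 0)) := by
  have hb' : (b : Module.End ℝ W) * b = -1 := hb
  let f : ℂ →ₐ[ℝ] Module.End ℝ W := Complex.lift ⟨b, hb'⟩
  letI : Module ℂ W := Module.compHom W f.toRingHom
  have hsmul : ∀ (z : ℂ) (w : W), z • w = f z w := fun _ _ => rfl
  haveI : IsScalarTower ℝ ℂ W := ⟨fun r z w => by
    rw [hsmul, hsmul, map_smul]; rfl⟩
  haveI : FiniteDimensional ℂ W := Module.Finite.of_restrictScalars_finite ℝ ℂ W
  set m := Module.finrank ℂ W with hm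
  let c : Module.Basis (Fin m) ℂ W := Module.finBasis ℂ W
  let B : Module.Basis (Fin m × Fin 2) ℝ W :=
    (Complex.basisOneI.smulTower c).reindex (Equiv.prodComm (Fin 2) (Fin m))
  refine ⟨m, B, fun j => ?_⟩
  have h0 : B (j, 0) = c j := by
    simp [B, Module.Basis.smulTower_apply, Equiv.prodComm, hsmul]
  have h1 : B (j, 1) = Complex.I • c j := by
    simp [B, Module.Basis.smulTower_apply, Equiv.prodComm]
  rw [h0, h1, hsmul]
  have : f Complex.I = b := Complex.liftAux_apply_I b hb'
  rw [this]
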